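/- Let c_i > 0 for each bidder and c_j > 0 for each item. A matching μ̂ with prices p̂ is bidder optimal for data (v̂_{i,j}, r̂_{i,j}, m̂_{i,j}) and utilities u_{i,j}(p_j) = v̂_{i,j} - c_i·c_j·p_j (for p_j < m̂_{i,j}, -∞ otherwise) if and only if the matching μ = μ̂ with prices p_j = c_j·p̂_j is bidder optimal for data (v̂_{i,j}/c_i, c_j·r̂_{i,j}, c_j·m̂_{i,j}) and standard utilities u_{i,j}(p_j) = v_{i,j} - p_j (for p_j < m_{i,j}, -∞ otherwise). -/

import Mathlib

open scoped Classical

noncomputable section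

variable {I J : Type*}

/-- Generalized utility `u_{i,j}(p_j) = v_{i,j} - c_i · c_j · p_j` if `p_j < m_{i,j}`, and
`-∞` otherwise. Standard utilities correspond to `c_i = c_j = 1`. -/
def gutil (v : I → J → ℝ) (m : I → J → EReal) (ci : I → ℝ) (cj : J → ℝ) (p : J → ℝ)
    (i : I) (j : J) : EReal :=
  if (p j : EReal) < m i j then ((v i j - ci i * cj j * p j : ℝ) : EReal) else ⊥

/-- Utility of bidder `i` under matching `μ` (dummy item `j0` gives utility 0), for an
abstract utility function `utilF`. -/
def gbidderU (utilF : (J → ℝ) → I → J → EReal) (j0 : J) (μ : I → J) (p : J → ℝ)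
    (i : I) : EReal :=
  if μ i = j0 then 0 else utilF p i (μ i)

/-- Feasibility for an abstract utility function: `μ` is a matching, utilities are
nonnegative, prices are nonnegative with the dummy item priced at `0`, and
`r_{i,j} ≤ p_j < m_{i,j}` on matched pairs. -/
def GFeasible (utilF : (J → ℝ) → I → J → EReal) (r : I → J → ℝ) (m : I → J → EReal)
    (j0 : J) (μ : I → J) (p : J → ℝ) : Prop :=
  (∀ i i', μ i = μ i' → μ i ≠ j0 → i = i') ∧
  (∀ i, 0 ≤ gbidderU utilF j0 μ p i) ∧
  p j0 = 0 ∧ (∀ j, 0 ≤ p j) ∧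
  (∀ i, r i (μ i) ≤ p (μ i) ∧ (p (μ i) : EReal) < m i (μ i))

/-- Stability: feasibility plus `u_i ≥ u_{i,j}(p_j)` for all bidder-item pairs. -/
def GStable (utilF : (J → ℝ) → I → J → EReal) (r : I → J → ℝ) (m : I → J → EReal)
    (j0 : J) (μ : I → J) (p : J → ℝ) : Prop :=
  GFeasible utilF r m j0 μ p ∧ ∀ i j, utilF p i j ≤ gbidderU utilF j0 μ p i

/-- Bidder optimality: stable, and every bidder weakly prefers it to every stable
matching. -/
def GBidderOptimal (utilF : (J → ℝ) → I → J → EReal) (r : I → J → ℝ)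
    (m : I → J → EReal) (j0 : J) (μ : I → J) (p : J → ℝ) : Prop :=
  GStable utilF r m j0 μ p ∧
    ∀ μ' p', GStable utilF r m j0 μ' p' →
      ∀ i, gbidderU utilF j0 μ' p' i ≤ gbidderU utilF j0 μ p i


lemma ereal_mul_c {c : ℝ} (z : EReal) :
    (c : EReal) * z = z / ((c⁻¹ : ℝ) : EReal) := by
  rw [div_eq_mul_inv, ← EReal.coe_inv, _root_.inv_inv, mul_comm]

lemma ereal_mul_le_mul_left {c : ℝ} (hc : 0 < c) {x y : EReal} :
    (c : EReal) * x ≤ (c : EReal) * y ↔ x ≤ y := by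
  rw [ereal_mul_c, ereal_mul_c]
  exact StrictMono.le_iff_le (EReal.strictMono_div_right_of_pos
    (EReal.coe_pos.2 (inv_pos.2 hc)) (EReal.coe_ne_top _))

lemma ereal_mul_lt_mul_left {c : ℝ} (hc : 0 < c) {x y : EReal} :
    (c : EReal) * x < (c : EReal) * y ↔ x < y := by
  rw [ereal_mul_c, ereal_mul_c]
  exact StrictMono.lt_iff_lt (EReal.strictMono_div_right_of_pos
    (EReal.coe_pos.2 (inv_pos.2 hc)) (EReal.coe_ne_top _))

section helper

variable {I J : Type*}

lemma gutil_eq (vh : I → J → ℝ) (mh : I → J → EReal)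
    (ci : I → ℝ) (cj : J → ℝ) (hci : ∀ i, 0 < ci i) (hcj : ∀ j, 0 < cj j)
    (p : J → ℝ) (i : I) (j : J) :
    gutil vh mh ci cj p i j =
      (ci i : EReal) * gutil (fun i j => vh i j / ci i)
        (fun i j => (cj j : EReal) * mh i j) (fun _ => 1) (fun _ => 1)
        (fun j => cj j * p j) i j := by
  unfold gutil
  have hcond : (((cj j * p j : ℝ)) : EReal) < (cj j : EReal) * mh i j ↔
      ((p j : ℝ) : EReal) < mh i j := by
    rw [EReal.coe_mul]
    exact ereal_mul_lt_mul_left (hcj j)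
  rw [if_congr hcond rfl rfl]
  by_cases h : ((p j : ℝ) : EReal) < mh i j
  · rw [if_pos h, if_pos h, ← EReal.coe_mul, EReal.coe_eq_coe_iff]
    field_simp [(hci i).ne']
  · rw [if_neg h, if_neg h, EReal.coe_mul_bot_of_pos (hci i)]

lemma gbidderU_eq (vh : I → J → ℝ) (mh : I → J → EReal)
    (ci : I → ℝ) (cj : J → ℝ) (hci : ∀ i, 0 < ci i) (hcj : ∀ j, 0 < cj j)
    (j0 : J) (μ : I → J) (p : J → ℝ) (i : I) :
    gbidderU (gutil vh mh ci cj) j0 μ p i =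
      (ci i : EReal) * gbidderU (gutil (fun i j => vh i j / ci i)
        (fun i j => (cj j : EReal) * mh i j) (fun _ => 1) (fun _ => 1)) j0 μ
        (fun j => cj j * p j) i := by
  unfold gbidderU
  by_cases h : μ i = j0
  · rw [if_pos h, if_pos h, mul_zero]
  · rw [if_neg h, if_neg h, gutil_eq vh mh ci cj hci hcj]

lemma gstable_iff (vh rh : I → J → ℝ) (mh : I → J → EReal)
    (ci : I → ℝ) (cj : J → ℝ) (hci : ∀ i, 0 < ci i) (hcj : ∀ j, 0 < cj j)
    (j0 : J) (μ : I → J) (p : J → ℝ) :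
    GStable (gutil vh mh ci cj) rh mh j0 μ p ↔
      GStable (gutil (fun i j => vh i j / ci i) (fun i j => (cj j : EReal) * mh i j)
          (fun _ => 1) (fun _ => 1))
        (fun i j => cj j * rh i j) (fun i j => (cj j : EReal) * mh i j)
        j0 μ (fun j => cj j * p j) := by
  unfold GStable GFeasible
  constructor
  · rintro ⟨⟨hmatch, hnn, hp0, hpn, hres⟩, hstab⟩
    refine ⟨⟨hmatch, ?_, ?_, ?_, ?_⟩, ?_⟩
    · intro i
      have := hnn i
      rw [gbidderU_eq vh mh ci cj hci hcj] at this
      exact (ereal_mul_le_mul_left (hci i)).1 ((mul_zero _).le.trans this)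
    · show cj j0 * p j0 = 0
      rw [hp0, mul_zero]
    · intro j; exact mul_nonneg (hcj j).le (hpn j)
    · intro i
      refine ⟨mul_le_mul_of_nonneg_left (hres i).1 (hcj _).le, ?_⟩
      rw [EReal.coe_mul]
      exact (ereal_mul_lt_mul_left (hcj _)).2 (hres i).2
    · intro i j
      have := hstab i j
      rw [gbidderU_eq vh mh ci cj hci hcj, gutil_eq vh mh ci cj hci hcj] at this
      exact (ereal_mul_le_mul_left (hci i)).1 this
  · rintro ⟨⟨hmatch, hnn, hp0, hpn, hres⟩, hstab⟩
    refine ⟨⟨hmatch, ?_, ?_, ?_, ?_⟩, ?_⟩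
    · intro i
      rw [gbidderU_eq vh mh ci cj hci hcj]
      have := hnn i
      calc (0 : EReal) = (ci i : EReal) * 0 := by rw [mul_zero]
        _ ≤ _ := (ereal_mul_le_mul_left (hci i)).2 this
    · have := hp0
      simpa [mul_eq_zero, (hcj j0).ne'] using this
    · intro j
      have := hpn j
      simpa [mul_nonneg_iff_of_pos_left (hcj j)] using this
    · intro i
      refine ⟨?_, ?_⟩
      · have := (hres i).1
        exact le_of_mul_le_mul_left this (hcj _)
      · have := (hres i).2
        rw [EReal.coe_mul] at this
        exact (ereal_mul_lt_mul_left (hcj _)).1 this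
    · intro i j
      rw [gbidderU_eq vh mh ci cj hci hcj, gutil_eq vh mh ci cj hci hcj]
      exact (ereal_mul_le_mul_left (hci i)).2 (hstab i j)

end helper

/-- `μ̂` with prices `p̂` is bidder optimal for `(v̂, r̂, m̂)` under generalized
utilities `v̂_{i,j} - c_i c_j p_j` iff `μ = μ̂` with prices `p_j = c_j p̂_j` is bidder optimal
for `(v̂_{i,j}/c_i, c_j r̂_{i,j}, c_j m̂_{i,j})` under standard utilities. -/
theorem bidder_optimal_transform (vh rh : I → J → ℝ) (mh : I → J → EReal)
    (ci : I → ℝ) (cj : J → ℝ) (hci : ∀ i, 0 < ci i) (hcj : ∀ j, 0 < cj j)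
    (j0 : J) (μ : I → J) (ph : J → ℝ) :
    GBidderOptimal (gutil vh mh ci cj) rh mh j0 μ ph ↔
      GBidderOptimal
        (gutil (fun i j => vh i j / ci i) (fun i j => (cj j : EReal) * mh i j)
          (fun _ => 1) (fun _ => 1))
        (fun i j => cj j * rh i j) (fun i j => (cj j : EReal) * mh i j)
        j0 μ (fun j => cj j * ph j) := by
  constructor
  · rintro ⟨hs, hopt⟩
    refine ⟨(gstable_iff vh rh mh ci cj hci hcj j0 μ ph).1 hs, ?_⟩
    intro μ' p' hs' i
    have hpe : (fun j => cj j * (p' j / cj j)) = p' := by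
      funext j; rw [mul_comm, div_mul_cancel₀ _ (hcj j).ne']
    have hs'' : GStable (gutil vh mh ci cj) rh mh j0 μ' (fun j => p' j / cj j) := by
      rw [gstable_iff vh rh mh ci cj hci hcj, hpe]; exact hs'
    have := hopt μ' (fun j => p' j / cj j) hs'' i
    rw [gbidderU_eq vh mh ci cj hci hcj, gbidderU_eq vh mh ci cj hci hcj, hpe] at this
    exact (ereal_mul_le_mul_left (hci i)).1 this
  · rintro ⟨hs, hopt⟩
    refine ⟨(gstable_iff vh rh mh ci cj hci hcj j0 μ ph).2 hs, ?_⟩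
    intro μ' p' hs' i
    have := hopt μ' (fun j => cj j * p' j)
      ((gstable_iff vh rh mh ci cj hci hcj j0 μ' p').1 hs') i
    rw [gbidderU_eq vh mh ci cj hci hcj, gbidderU_eq vh mh ci cj hci hcj]
    exact (ereal_mul_le_mul_left (hci i)).2 this
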